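/- Let G be a finite simple graph on a vertex type V, and let cone(G) be the simple graph on Option V in which the extra vertex (none) is adjacent to every vertex (some a), and (some a) is adjacent to (some b) if and only if a and b are adjacent in G. Let H be a finite simple graph. Then there is a bijection between the set of graph homomorphisms from cone(G) to H and the disjoint union, over all vertices w of H, of the sets of graph homomorphisms from G to the subgraph of H induced on the neighborhood of w. In particular the number of homomorphisms from cone(G) to H equals ∑_{w ∈ V(H)} (number of homomorphisms from G to H_w). -/

import Mathlib

/-- The cone over a simple graph `G`: one new vertex (`none`) adjacent to every vertex of
`G`, with the adjacency of `G` preserved on the old vertices. -/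
def SimpleGraph.cone {V : Type*} (G : SimpleGraph V) : SimpleGraph (Option V) where
  Adj u v :=
    match u, v with
    | none, none => False
    | none, some _ => True
    | some _, none => True
    | some a, some b => G.Adj a b
  symm := by
    constructor
    intro u v h
    cases u <;> cases v <;> simp_all <;> exact h.symm
  loopless := by
    constructor
    intro u
    cases u <;> simp

def coneEquiv {V W : Type*} (G : SimpleGraph V) (H : SimpleGraph W) :
    (G.cone →g H) ≃ (Σ w : W, (G →g H.induce (H.neighborSet w))) where
  toFun f :=
    ⟨f none,
      { toFun := fun v => ⟨f (some v), f.map_adj (by trivial : G.cone.Adj none (some v))⟩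
        map_rel' := fun h => f.map_adj h }⟩
  invFun p :=
    { toFun := fun u => match u with
        | none => p.1
        | some v => (p.2 v).1
      map_rel' := by
        rintro (_|a) (_|b) h
        · exact absurd h (by simp [SimpleGraph.cone])
        · exact ((p.2 b).2 : H.Adj _ _)
        · exact ((p.2 a).2 : H.Adj _ _).symm
        · exact p.2.map_adj h }
  left_inv f := by
    ext u
    cases u <;> rfl
  right_inv p := by
    rcases p with ⟨w, g⟩
    rfl

theorem stmt_8 {V W : Type*} [Fintype V] [Fintype W]
    (G : SimpleGraph V) (H : SimpleGraph W) :
    Nonempty ((G.cone →g H) ≃ (Σ w : W, (G →g H.induce (H.neighborSet w)))) ∧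
    Nat.card (G.cone →g H) = ∑ w : W, Nat.card (G →g H.induce (H.neighborSet w)) := by
  classical
  haveI : ∀ w : W, Fintype (G →g H.induce (H.neighborSet w)) := fun w =>
    Fintype.ofInjective (fun f => (f : V → _)) DFunLike.coe_injective
  refine ⟨⟨coneEquiv G H⟩, ?_⟩
  rw [Nat.card_congr (coneEquiv G H)]
  simp [Nat.card_eq_fintype_card, Fintype.card_sigma]
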